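/- arXiv:2203.16435 — 4 statements merged into one kernel-verified Lean document; each statement's English description precedes it below -/
import Mathlib

section
/- Let F ⊆ ℂ be an imaginary quadratic field and let J ∈ GL₃(F) be hermitian of signature (2,1). Then for every nonzero isotropic vector v̄ ∈ F³ for J, there exist a positive rational number β and a matrix T ∈ GL₃(F) such that Tᴴ · J_β · T = J and T · v̄ = e₁, where e₁ is the first standard basis vector of F³. (That is, (V, J) is isomorphic to (F³, J_β) by an isomorphism sending v̄ to the first vector of the canonical basis.) -/
open Matrix

theorem quadClosure (F : IntermediateField ℚ ℂ)
    (hdeg : Module.finrank ℚ F = 2)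
    (him : ∃ z : F, (z : ℂ).im ≠ 0) :
    (∀ z : F, (starRingEnd ℂ) (z : ℂ) ∈ F) ∧
    (∀ z : F, (starRingEnd ℂ) (z : ℂ) = (z : ℂ) → ∃ q : ℚ, (z : ℂ) = (q : ℂ)) := by
  obtain ⟨z₀, hz₀⟩ := him
  have hFD : FiniteDimensional ℚ F := FiniteDimensional.of_finrank_pos (by omega)
  set w : ℂ := (z₀ : ℂ) with hw
  have dep3 : ∀ f : Fin 3 → F, ∃ g : Fin 3 → ℚ, (∑ i, g i • f i = 0) ∧ ∃ i, g i ≠ 0 := by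
    intro f
    have h : ¬ LinearIndependent ℚ f := by
      intro h
      have := h.fintype_card_le_finrank
      rw [hdeg] at this
      simp at this
    exact Fintype.not_linearIndependent_iff.mp h
  have hcast : ∀ (q : ℚ) (x : F), ((q • x : F) : ℂ) = (q : ℂ) * (x : ℂ) := by
    intro q x
    push_cast
    rw [Rat.smul_def]
  have indep2 : ∀ a b : ℚ, (a : ℂ) + (b : ℂ) * w = 0 → a = 0 ∧ b = 0 := by
    intro a b hab
    have h1 : (b : ℝ) * w.im = 0 := by
      have := congrArg Complex.im hab
      simpa [Complex.add_im, Complex.mul_im] using this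
    have hb : b = 0 := by
      rcases mul_eq_zero.mp h1 with h | h
      · exact_mod_cast h
      · exact absurd h hz₀
    subst hb
    have h2 : (a : ℂ) = 0 := by simpa using hab
    exact ⟨by exact_mod_cast h2, rfl⟩
  obtain ⟨g, hg, i, hgi⟩ := dep3 ![1, z₀, z₀ ^ 2]
  rw [Fin.sum_univ_three] at hg
  simp only [Matrix.cons_val_zero, Matrix.cons_val_one, Matrix.head_cons,
    Matrix.cons_val_two, Matrix.tail_cons] at hg
  have hgc : (g 0 : ℂ) + (g 1 : ℂ) * w + (g 2 : ℂ) * w ^ 2 = 0 := by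
    have h := congrArg (fun x : F => (x : ℂ)) hg
    simp only [ZeroMemClass.coe_zero] at h
    push_cast [hcast] at h
    linear_combination h
  have hg2 : g 2 ≠ 0 := by
    intro h2
    rw [h2] at hgc
    push_cast at hgc
    obtain ⟨h0, h1⟩ := indep2 (g 0) (g 1) (by linear_combination hgc)
    fin_cases i
    · exact hgi h0
    · exact hgi h1
    · exact hgi h2
  set c1 : ℚ := g 1 / g 2 with hc1
  set c0 : ℚ := g 0 / g 2 with hc0
  have hg2c : (g 2 : ℂ) ≠ 0 := by exact_mod_cast hg2
  have hquad : w ^ 2 + (c1 : ℂ) * w + (c0 : ℂ) = 0 := by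
    rw [hc1, hc0]
    push_cast
    field_simp
    linear_combination hgc
  have hconjw : (starRingEnd ℂ) w = -(c1 : ℂ) - w := by
    have h2 : ((starRingEnd ℂ) w) ^ 2 + (c1 : ℂ) * (starRingEnd ℂ) w + (c0 : ℂ) = 0 := by
      have h := congrArg (starRingEnd ℂ) hquad
      simpa [map_add, _root_.map_mul, map_pow] using h
    have hfac : ((starRingEnd ℂ) w - w) * ((starRingEnd ℂ) w + w + (c1 : ℂ)) = 0 := by
      linear_combination h2 - hquad
    have hne : (starRingEnd ℂ) w - w ≠ 0 := by
      intro h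
      exact hz₀ (Complex.conj_eq_iff_im.mp (sub_eq_zero.mp h))
    rcases mul_eq_zero.mp hfac with h | h
    · exact absurd h hne
    · linear_combination h
  have rep : ∀ z : F, ∃ a b : ℚ, (z : ℂ) = (a : ℂ) + (b : ℂ) * w := by
    intro z
    obtain ⟨g', hg', i', hgi'⟩ := dep3 ![1, z₀, z]
    rw [Fin.sum_univ_three] at hg'
    simp only [Matrix.cons_val_zero, Matrix.cons_val_one, Matrix.head_cons,
      Matrix.cons_val_two, Matrix.tail_cons] at hg'
    have hgc' : (g' 0 : ℂ) + (g' 1 : ℂ) * w + (g' 2 : ℂ) * (z : ℂ) = 0 := by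
      have h := congrArg (fun x : F => (x : ℂ)) hg'
      simp only [ZeroMemClass.coe_zero] at h
      push_cast [hcast] at h
      linear_combination h
    have hg2' : g' 2 ≠ 0 := by
      intro h2
      rw [h2] at hgc'
      push_cast at hgc'
      obtain ⟨h0, h1⟩ := indep2 (g' 0) (g' 1) (by linear_combination hgc')
      fin_cases i'
      · exact hgi' h0
      · exact hgi' h1
      · exact hgi' h2
    have hg2c' : (g' 2 : ℂ) ≠ 0 := by exact_mod_cast hg2'
    refine ⟨-g' 0 / g' 2, -g' 1 / g' 2, ?_⟩
    have hz : (z : ℂ) = (-(g' 0 : ℂ) - (g' 1 : ℂ) * w) / (g' 2 : ℂ) := by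
      rw [eq_div_iff hg2c']
      linear_combination hgc'
    rw [hz]
    push_cast
    ring
  have hq : ∀ q : ℚ, (q : ℂ) ∈ F := fun q => (eq_ratCast (algebraMap ℚ ℂ) q) ▸ F.algebraMap_mem q
  constructor
  · intro z
    obtain ⟨a, b, hab⟩ := rep z
    have hz' : (starRingEnd ℂ) (z : ℂ) = ((a : ℂ) - (b : ℂ) * (c1 : ℂ)) - (b : ℂ) * w := by
      rw [hab, map_add, _root_.map_mul, map_ratCast, map_ratCast, hconjw]
      ring
    rw [hz']
    exact sub_mem (sub_mem (hq a) (mul_mem (hq b) (hq c1))) (mul_mem (hq b) (SetLike.coe_mem z₀))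
  · intro z hz
    obtain ⟨a, b, hab⟩ := rep z
    have hcz : (starRingEnd ℂ) (z : ℂ) = (a : ℂ) + (b : ℂ) * (-(c1 : ℂ) - w) := by
      rw [hab, map_add, _root_.map_mul, hconjw, map_ratCast, map_ratCast]
    rw [hz, hab] at hcz
    have hfac : (b : ℂ) * (2 * w + (c1 : ℂ)) = 0 := by linear_combination hcz
    rcases mul_eq_zero.mp hfac with h | h
    · refine ⟨a, ?_⟩
      rw [hab, h]
      simp
    · exfalso
      apply hz₀
      have h2 : w = -(c1 : ℂ) / 2 := by linear_combination h / 2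
      rw [h2]
      simp [Complex.div_im]

set_option maxHeartbeats 1000000 in
/-- For an imaginary quadratic field `F ⊆ ℂ`, a hermitian `J ∈ GL₃(F)` of
signature `(2,1)` and a nonzero isotropic vector `v̄ ∈ F³` for `J`, there exist
`β ∈ ℚ_{>0}` and `T ∈ GL₃(F)` with `Tᴴ ⬝ J_β ⬝ T = J` and `T ⬝ v̄ = e₁`. -/
theorem hecke_stmt3 (F : IntermediateField ℚ ℂ)
    (hdeg : Module.finrank ℚ F = 2)
    (him : ∃ z : F, (z : ℂ).im ≠ 0)
    (J : Matrix (Fin 3) (Fin 3) F) (hJinv : IsUnit J.det)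
    (hherm : (J.map ((↑) : F → ℂ))ᴴ = J.map ((↑) : F → ℂ))
    (hsig : ∃ P : Matrix (Fin 3) (Fin 3) ℂ, IsUnit P.det ∧
      Pᴴ * J.map ((↑) : F → ℂ) * P = Matrix.diagonal ![1, 1, -1])
    (v : Fin 3 → F) (hv : v ≠ 0)
    (hiso : star (fun i => ((v i : ℂ))) ⬝ᵥ ((J.map ((↑) : F → ℂ)) *ᵥ fun i => ((v i : ℂ))) = 0) :
    ∃ (β : ℚ) (T : Matrix (Fin 3) (Fin 3) F), 0 < β ∧ IsUnit T.det ∧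
      (T.map ((↑) : F → ℂ))ᴴ * !![0, 0, 1; 0, (β : ℂ), 0; 1, 0, 0] * T.map ((↑) : F → ℂ) =
        J.map ((↑) : F → ℂ) ∧
      T *ᵥ v = Pi.single (0 : Fin 3) (1 : F) := by
  obtain ⟨key1, key2⟩ := quadClosure F hdeg him
  obtain ⟨P, hPu, hP⟩ := hsig
  set Jc : Matrix (Fin 3) (Fin 3) ℂ := J.map ((↑) : F → ℂ) with hJc
  set vc : Fin 3 → ℂ := fun i => ((v i : ℂ)) with hvc
  have hqmem : ∀ r : ℚ, (r : ℂ) ∈ F := fun r => (eq_ratCast (algebraMap ℚ ℂ) r) ▸ F.algebraMap_mem r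
  have key1' : ∀ c : ℂ, c ∈ F → (starRingEnd ℂ) c ∈ F := fun c hc => key1 ⟨c, hc⟩
  have key2' : ∀ c : ℂ, c ∈ F → (starRingEnd ℂ) c = c → ∃ q : ℚ, c = (q : ℂ) := fun c hc h => key2 ⟨c, hc⟩ h
  have hJmem : ∀ i j, Jc i j ∈ F := fun i j => SetLike.coe_mem _
  have hJsym : ∀ i j, (starRingEnd ℂ) (Jc i j) = Jc j i := by
    intro i j
    have h := congrFun (congrFun hherm j) i
    rwa [Matrix.conjTranspose_apply] at h
  have hJcdet : Jc.det ≠ 0 := by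
    have h1 : (algebraMap F ℂ) J.det = Jc.det := by
      rw [RingHom.map_det]; rfl
    rw [← h1]
    simp only [ne_eq, map_eq_zero]
    exact hJinv.ne_zero
  have hJcinv : IsUnit Jc.det := isUnit_iff_ne_zero.mpr hJcdet
  have hvecMul : ∀ x : Fin 3 → ℂ, x ᵥ* Jc = 0 → x = 0 := by
    intro x hx
    have h := congrArg (· ᵥ* Jc⁻¹) hx
    simpa [Matrix.vecMul_vecMul, Matrix.mul_nonsing_inv _ hJcinv] using h
  set B : (Fin 3 → ℂ) → (Fin 3 → ℂ) → ℂ := fun x y => star x ⬝ᵥ (Jc *ᵥ y) with hB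
  have hBexp : ∀ x y, B x y = ∑ i, ∑ j, (starRingEnd ℂ) (x i) * (Jc i j * y j) := by
    intro x y
    simp [hB, dotProduct, Matrix.mulVec, Finset.mul_sum]
  have hBr : ∀ x y, B x y = (star x ᵥ* Jc) ⬝ᵥ y := by
    intro x y
    rw [hB]; exact Matrix.dotProduct_mulVec _ _ _
  have hBmem : ∀ x y, (∀ i, x i ∈ F) → (∀ i, y i ∈ F) → B x y ∈ F := by
    intro x y hx hy
    rw [hBexp]
    exact sum_mem fun i _ => sum_mem fun j _ =>
      mul_mem (key1' _ (hx i)) (mul_mem (hJmem i j) (hy j))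
  have hBconj : ∀ x y, (starRingEnd ℂ) (B x y) = B y x := by
    intro x y
    rw [hBexp, hBexp]
    simp only [map_sum, _root_.map_mul, Complex.conj_conj, hJsym]
    rw [Finset.sum_comm]
    exact Finset.sum_congr rfl fun i _ => Finset.sum_congr rfl fun j _ => by ring
  -- linearity
  have hBsubL : ∀ x y z, B (x - y) z = B x z - B y z := by
    intro x y z
    simp only [hBexp, Fin.sum_univ_three, Pi.sub_apply, map_sub]
    ring
  have hBsmulL : ∀ (c : ℂ) x y, B (c • x) y = (starRingEnd ℂ) c * B x y := by
    intro c x y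
    simp only [hBexp, Fin.sum_univ_three, Pi.smul_apply, smul_eq_mul, _root_.map_mul]
    ring
  have hBsubR : ∀ x y z, B x (y - z) = B x y - B x z := by
    intro x y z
    simp only [hBexp, Fin.sum_univ_three, Pi.sub_apply]
    ring
  have hBaddR : ∀ x y z, B x (y + z) = B x y + B x z := by
    intro x y z
    simp only [hBexp, Fin.sum_univ_three, Pi.add_apply]
    ring
  have hBsmulR : ∀ (c : ℂ) x y, B x (c • y) = c * B x y := by
    intro c x y
    simp only [hBexp, Fin.sum_univ_three, Pi.smul_apply, smul_eq_mul]
    ring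
  -- v facts
  have hvF : ∀ i, vc i ∈ F := fun i => SetLike.coe_mem _
  have hvv : B vc vc = 0 := hiso
  have hvcne : vc ≠ 0 := by
    intro h0
    apply hv
    funext i
    show v i = 0
    have h : ((v i : ℂ)) = 0 := by simpa [hvc] using congrFun h0 i
    exact_mod_cast h
  -- first row
  set r1 : Fin 3 → ℂ := star vc ᵥ* Jc with hr1
  have hr1mem : ∀ j, r1 j ∈ F := by
    intro j
    rw [hr1]
    simp only [Matrix.vecMul, dotProduct, Pi.star_apply]
    exact sum_mem fun i _ => mul_mem (key1' _ (hvF i)) (hJmem i j)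
  have hr1ne : r1 ≠ 0 := by
    intro h0
    have h1 : star vc = 0 := hvecMul _ h0
    apply hvcne
    funext i
    have := congrFun h1 i
    simpa using this
  obtain ⟨j₀, hj₀⟩ := Function.ne_iff.mp hr1ne
  -- w with B v w = 1
  set wc : Fin 3 → ℂ := fun i => if i = j₀ then (r1 j₀)⁻¹ else 0 with hwc
  have hwF : ∀ i, wc i ∈ F := by
    intro i
    rw [hwc]
    rcases eq_or_ne i j₀ with h | h
    · simp [h, hr1mem j₀]
    · simpa [h] using zero_mem F
  have hBvw : B vc wc = 1 := by
    rw [hBr, ← hr1]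
    simp only [dotProduct, hwc, mul_ite, mul_zero, Finset.sum_ite_eq']
    simp [mul_inv_cancel₀ hj₀]
  have hBwv : B wc vc = 1 := by
    rw [← hBconj, hBvw, _root_.map_one]
  have htF : B wc wc ∈ F := hBmem _ _ hwF hwF
  obtain ⟨q, hq⟩ := key2' _ htF (hBconj wc wc)
  -- w' hyperbolic partner
  set s : ℂ := (q : ℂ) / 2 with hs
  have hsconj : (starRingEnd ℂ) s = s := by
    rw [hs, map_div₀, map_ratCast, map_ofNat]
  have hsF : s ∈ F := by
    rw [hs]
    have : ((q : ℂ)) / 2 = (((q / 2 : ℚ)) : ℂ) := by push_cast; ring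
    rw [this]; exact hqmem _
  set w'c : Fin 3 → ℂ := wc - s • vc with hw'c
  have hw'F : ∀ i, w'c i ∈ F := by
    intro i
    rw [hw'c]
    exact sub_mem (hwF i) (mul_mem hsF (hvF i))
  have hvw' : B vc w'c = 1 := by
    rw [hw'c, hBsubR, hBsmulR, hvv, hBvw]
    ring
  have hw'v : B w'c vc = 1 := by
    rw [← hBconj, hvw', _root_.map_one]
  have hw'w' : B w'c w'c = 0 := by
    rw [hw'c, hBsubL, hBsmulL, hBsubR, hBsmulR, hBsubR, hBsmulR, hvv, hBvw, hBwv, hq, hsconj, hs]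
    ring
  -- second row and independence
  set r2 : Fin 3 → ℂ := star w'c ᵥ* Jc with hr2
  have hr2mem : ∀ j, r2 j ∈ F := by
    intro j
    rw [hr2]
    simp only [Matrix.vecMul, dotProduct, Pi.star_apply]
    exact sum_mem fun i _ => mul_mem (key1' _ (hw'F i)) (hJmem i j)
  have indep : ∀ a b : ℂ, a • r1 + b • r2 = 0 → a = 0 ∧ b = 0 := by
    intro a b hab
    have hx : star ((starRingEnd ℂ) a • vc + (starRingEnd ℂ) b • w'c) ᵥ* Jc = a • r1 + b • r2 := by
      rw [star_add, star_smul, star_smul, Matrix.add_vecMul, Matrix.smul_vecMul, Matrix.smul_vecMul]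
      simp [hr1, hr2]
    have h0 : star ((starRingEnd ℂ) a • vc + (starRingEnd ℂ) b • w'c) = 0 := hvecMul _ (hx.trans hab)
    have hz : (starRingEnd ℂ) a • vc + (starRingEnd ℂ) b • w'c = 0 := by
      have := congrArg star h0
      simpa using this
    have hb : (starRingEnd ℂ) b = 0 := by
      have h1 : B vc ((starRingEnd ℂ) a • vc + (starRingEnd ℂ) b • w'c) = (starRingEnd ℂ) b := by
        rw [hBaddR, hBsmulR, hBsmulR, hvv, hvw']
        ring
      rw [hz] at h1
      simp [hB] at h1
      exact h1.symm
    have ha : (starRingEnd ℂ) a = 0 := by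
      have h1 : B w'c ((starRingEnd ℂ) a • vc + (starRingEnd ℂ) b • w'c) = (starRingEnd ℂ) a := by
        rw [hBaddR, hBsmulR, hBsmulR, hw'v, hw'w']
        ring
      rw [hz] at h1
      simp [hB] at h1
      exact h1.symm
    constructor
    · have := congrArg (starRingEnd ℂ) ha
      simpa using this
    · have := congrArg (starRingEnd ℂ) hb
      simpa using this
  -- the orthogonal vector u (cross product of rows)
  set u : Fin 3 → ℂ := ![r1 1 * r2 2 - r1 2 * r2 1, r1 2 * r2 0 - r1 0 * r2 2,
      r1 0 * r2 1 - r1 1 * r2 0] with hu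
  have huF : ∀ i, u i ∈ F := by
    intro i
    fin_cases i <;>
      simp only [hu, Matrix.cons_val_zero, Matrix.cons_val_one, Matrix.head_cons,
        Matrix.cons_val_two, Matrix.tail_cons] <;>
      exact sub_mem (mul_mem (hr1mem _) (hr2mem _)) (mul_mem (hr1mem _) (hr2mem _))
  have horth1 : r1 ⬝ᵥ u = 0 := by
    simp [dotProduct, Fin.sum_univ_three, hu]
    ring
  have horth2 : r2 ⬝ᵥ u = 0 := by
    simp [dotProduct, Fin.sum_univ_three, hu]
    ring
  have hBvu : B vc u = 0 := by rw [hBr, ← hr1]; exact horth1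
  have hBw'u : B w'c u = 0 := by rw [hBr, ← hr2]; exact horth2
  have hBuv : B u vc = 0 := by rw [← hBconj, hBvu, _root_.map_zero]
  have hBuw' : B u w'c = 0 := by rw [← hBconj, hBw'u, _root_.map_zero]
  have hune : u ≠ 0 := by
    intro h0
    have e0 : r1 1 * r2 2 - r1 2 * r2 1 = 0 := congrFun h0 0
    have e1 : r1 2 * r2 0 - r1 0 * r2 2 = 0 := congrFun h0 1
    have e2 : r1 0 * r2 1 - r1 1 * r2 0 = 0 := congrFun h0 2
    have hm : ∀ j k : Fin 3, r1 j * r2 k = r1 k * r2 j := by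
      intro j k
      fin_cases j <;> fin_cases k <;>
        simp only [show (⟨0, by omega⟩ : Fin 3) = 0 from rfl,
          show (⟨1, by omega⟩ : Fin 3) = 1 from rfl,
          show (⟨2, by omega⟩ : Fin 3) = 2 from rfl] <;>
        first
          | rfl
          | linear_combination e0
          | linear_combination -e0
          | linear_combination e1
          | linear_combination -e1
          | linear_combination e2
          | linear_combination -e2
    have hcomb : r2 j₀ • r1 + (-(r1 j₀)) • r2 = 0 := by
      funext k
      simp only [Pi.add_apply, Pi.smul_apply, smul_eq_mul, Pi.zero_apply]
      linear_combination -hm j₀ k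
    obtain ⟨h1, h2⟩ := indep _ _ hcomb
    exact hj₀ (neg_eq_zero.mp h2)
  -- β
  have hβF : B u u ∈ F := hBmem _ _ huF huF
  obtain ⟨qβ, hβ⟩ := key2' _ hβF (hBconj u u)
  -- the matrix S with columns v, u, w'
  set Sc : Matrix (Fin 3) (Fin 3) ℂ := Matrix.of fun i j => ![vc, u, w'c] j i with hSc
  have hentry : ∀ (M : Matrix (Fin 3) (Fin 3) ℂ) i j,
      (Mᴴ * Jc * M) i j = B (fun k => M k i) (fun k => M k j) := by
    intro M i j
    simp [hB, Matrix.mul_apply, Matrix.conjTranspose_apply, dotProduct,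
      Matrix.mulVec, Fin.sum_univ_three]
    ring
  have Gram : Scᴴ * Jc * Sc = !![0, 0, 1; 0, (qβ : ℂ), 0; 1, 0, 0] := by
    ext i j
    rw [hentry]
    fin_cases i <;> fin_cases j <;>
      simp only [hSc, Matrix.of_apply, Matrix.cons_val_zero, Matrix.cons_val_one,
        Matrix.head_cons, Matrix.cons_val_two, Matrix.tail_cons, Matrix.cons_val',
        Matrix.empty_val', Matrix.cons_val_fin_one, Matrix.head_fin_const, Fin.isValue] <;>
      first
        | exact hvv
        | exact hBvu
        | exact hvw'
        | exact hBuv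
        | exact hβ
        | exact hBuw'
        | exact hw'v
        | exact hBw'u
        | exact hw'w'
  -- determinant of Sc is nonzero
  have hScdet : Sc.det ≠ 0 := by
    intro hdet0
    obtain ⟨x, hxne, hxz⟩ := Matrix.exists_mulVec_eq_zero_iff.mpr hdet0
    have hxv : Sc *ᵥ x = x 0 • vc + x 1 • u + x 2 • w'c := by
      funext i
      simp [hSc, Matrix.mulVec, dotProduct, Fin.sum_univ_three]
      ring
    have hz : x 0 • vc + x 1 • u + x 2 • w'c = 0 := by rw [← hxv]; exact hxz
    have hx2 : x 2 = 0 := by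
      have h1 : B vc (x 0 • vc + x 1 • u + x 2 • w'c) = x 2 := by
        rw [hBaddR, hBaddR, hBsmulR, hBsmulR, hBsmulR, hvv, hBvu, hvw']
        ring
      rw [hz] at h1
      simp [hB] at h1
      exact h1.symm
    have hx0 : x 0 = 0 := by
      have h1 : B w'c (x 0 • vc + x 1 • u + x 2 • w'c) = x 0 := by
        rw [hBaddR, hBaddR, hBsmulR, hBsmulR, hBsmulR, hw'v, hBw'u, hw'w']
        ring
      rw [hz] at h1
      simp [hB] at h1
      exact h1.symm
    have hx1 : x 1 = 0 := by
      rw [hx0, hx2] at hz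
      simp only [zero_smul, zero_add, add_zero] at hz
      rcases smul_eq_zero.mp hz with h | h
      · exact h
      · exact absurd h hune
    apply hxne
    funext i
    fin_cases i
    · exact hx0
    · exact hx1
    · exact hx2
  -- β is nonzero
  have hqβne : (qβ : ℂ) ≠ 0 := by
    intro h0
    have hdetG : (!![0, 0, 1; 0, (qβ : ℂ), 0; 1, 0, 0]).det = -(qβ : ℂ) := by
      simp [Matrix.det_fin_three]
    have h1 : Scᴴ.det * Jc.det * Sc.det = -(qβ : ℂ) := by
      rw [← Matrix.det_mul, ← Matrix.det_mul, Gram, hdetG]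
    rw [h0] at h1
    simp only [neg_zero] at h1
    have h2 : Scᴴ.det ≠ 0 := by
      rw [Matrix.det_conjTranspose]
      simpa using hScdet
    exact (mul_ne_zero (mul_ne_zero h2 hJcdet) hScdet) h1
  have hqβne' : qβ ≠ 0 := by exact_mod_cast hqβne
  -- β is positive, via the signature hypothesis
  have hqβpos : 0 < qβ := by
    rcases lt_trichotomy qβ 0 with hneg | hzero | hpos
    · exfalso
      set D : Matrix (Fin 3) (Fin 3) ℂ := Matrix.diagonal ![1, 1, -1] with hD
      have hPHu : IsUnit Pᴴ.det := by
        rw [Matrix.det_conjTranspose]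
        exact hPu.star
      have h1 : Pᴴ⁻¹ * Pᴴ = 1 := Matrix.nonsing_inv_mul _ hPHu
      have h2 : P * P⁻¹ = 1 := Matrix.mul_nonsing_inv _ hPu
      have hJc' : Jc = Pᴴ⁻¹ * D * P⁻¹ := by
        have key : Pᴴ⁻¹ * (Pᴴ * Jc * P) * P⁻¹ = Jc := by
          calc Pᴴ⁻¹ * (Pᴴ * Jc * P) * P⁻¹
              = (Pᴴ⁻¹ * Pᴴ) * Jc * (P * P⁻¹) := by noncomm_ring
            _ = Jc := by rw [h1, h2, Matrix.one_mul, Matrix.mul_one]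
        rw [← key, hP]
      set Q : Matrix (Fin 3) (Fin 3) ℂ := P⁻¹ * Sc with hQdef
      have hQ : Qᴴ * D * Q = !![0, 0, 1; 0, (qβ : ℂ), 0; 1, 0, 0] := by
        rw [← Gram, hJc', hQdef, Matrix.conjTranspose_mul, Matrix.conjTranspose_nonsing_inv]
        noncomm_ring
      -- choose (a, b) ≠ 0 with third coordinate of Q ⬝ ![a, b, -a] vanishing
      obtain ⟨a, b, hab0, habe⟩ : ∃ a b : ℂ, ¬(a = 0 ∧ b = 0) ∧
          Q 2 0 * a + Q 2 1 * b + Q 2 2 * (-a) = 0 := by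
        by_cases hc1 : Q 2 1 = 0
        · by_cases hc2 : Q 2 0 = Q 2 2
          · exact ⟨1, 0, by simp, by rw [hc2]; ring⟩
          · refine ⟨0, Q 2 2 - Q 2 0, ?_, by rw [hc1]; ring⟩
            rintro ⟨-, h2⟩
            exact hc2 (sub_eq_zero.mp h2).symm
        · refine ⟨Q 2 1, Q 2 2 - Q 2 0, ?_, by ring⟩
          rintro ⟨h1, -⟩
          exact hc1 h1
      set x : Fin 3 → ℂ := ![a, b, -a] with hx
      set y : Fin 3 → ℂ := Q *ᵥ x with hy
      have hy2 : y 2 = 0 := by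
        have he : y 2 = Q 2 0 * a + Q 2 1 * b + Q 2 2 * (-a) := by
          rw [hy, hx]
          simp only [Matrix.mulVec, dotProduct, Fin.sum_univ_three,
            Matrix.cons_val_zero, Matrix.cons_val_one, Matrix.head_cons,
            Matrix.cons_val_two, Matrix.tail_cons]
        rw [he, habe]
      have hE0 : star x ⬝ᵥ (!![0, 0, 1; 0, (qβ : ℂ), 0; 1, 0, 0] *ᵥ x)
          = star y ⬝ᵥ (D *ᵥ y) := by
        rw [← hQ]
        rw [show Qᴴ * D * Q = Qᴴ * (D * Q) from by rw [Matrix.mul_assoc]]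
        rw [← Matrix.mulVec_mulVec]
        rw [Matrix.dotProduct_mulVec, ← Matrix.star_mulVec, ← hy, Matrix.mulVec_mulVec]
      have hE : -2 * (a * (starRingEnd ℂ) a) + (qβ : ℂ) * (b * (starRingEnd ℂ) b)
          = y 0 * (starRingEnd ℂ) (y 0) + y 1 * (starRingEnd ℂ) (y 1) := by
        have hL : star x ⬝ᵥ (!![0, 0, 1; 0, (qβ : ℂ), 0; 1, 0, 0] *ᵥ x)
            = -2 * (a * (starRingEnd ℂ) a) + (qβ : ℂ) * (b * (starRingEnd ℂ) b) := by
          simp [dotProduct, Matrix.mulVec, Fin.sum_univ_three, hx, Matrix.vecHead, Matrix.vecTail]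
          ring
        have hR : star y ⬝ᵥ (D *ᵥ y)
            = y 0 * (starRingEnd ℂ) (y 0) + y 1 * (starRingEnd ℂ) (y 1) := by
          simp [hD, dotProduct, Matrix.mulVec, Fin.sum_univ_three,
            Matrix.diagonal, hy2]
          ring
        rw [← hL, ← hR, hE0]
      rw [Complex.mul_conj, Complex.mul_conj, Complex.mul_conj, Complex.mul_conj] at hE
      have hre : -2 * Complex.normSq a + (qβ : ℝ) * Complex.normSq b
          = Complex.normSq (y 0) + Complex.normSq (y 1) := by exact_mod_cast hE
      have hqr : (qβ : ℝ) < 0 := by exact_mod_cast hneg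
      have hn0 := Complex.normSq_nonneg (y 0)
      have hn1 := Complex.normSq_nonneg (y 1)
      have hna := Complex.normSq_nonneg a
      have hnb := Complex.normSq_nonneg b
      rcases not_and_or.mp hab0 with ha | hb
      · have : 0 < Complex.normSq a := Complex.normSq_pos.mpr ha
        nlinarith
      · have : 0 < Complex.normSq b := Complex.normSq_pos.mpr hb
        nlinarith
    · exact absurd hzero hqβne'
    · exact hpos
  -- assemble T over F
  have hmemS : ∀ i j, Sc i j ∈ F := by
    intro i j
    fin_cases j
    · exact hvF i
    · exact huF i
    · exact hw'F i
  set S : Matrix (Fin 3) (Fin 3) F := Matrix.of fun i j => (⟨Sc i j, hmemS i j⟩ : F) with hS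
  have hSmap : S.map ((↑) : F → ℂ) = Sc := by
    ext i j
    rfl
  have hdetS : S.det ≠ 0 := by
    intro h0
    apply hScdet
    have h1 : (algebraMap F ℂ) S.det = Sc.det := by
      rw [RingHom.map_det, ← hSmap]
      rfl
    rw [← h1, h0, map_zero]
  have hdetSu : IsUnit S.det := isUnit_iff_ne_zero.mpr hdetS
  refine ⟨qβ, S⁻¹, hqβpos, ?_, ?_, ?_⟩
  · rw [Matrix.det_nonsing_inv]
    exact isUnit_iff_ne_zero.mpr (by simp [Ring.inverse_eq_inv', hdetS])
  · have hST : S * S⁻¹ = 1 := Matrix.mul_nonsing_inv _ hdetSu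
    have hSTc : Sc * (S⁻¹).map ((↑) : F → ℂ) = 1 := by
      rw [← hSmap]
      have : S.map ((↑) : F → ℂ) * (S⁻¹).map ((↑) : F → ℂ)
          = (S * S⁻¹).map ((↑) : F → ℂ) := by
        rw [show ((↑) : F → ℂ) = ⇑(algebraMap F ℂ) from rfl, ← RingHom.mapMatrix_apply,
          ← RingHom.mapMatrix_apply, ← RingHom.mapMatrix_apply, _root_.map_mul]
      rw [this, hST]
      ext i j
      by_cases h : i = j <;> simp [h, Matrix.one_apply]
    set Tc := (S⁻¹).map ((↑) : F → ℂ) with hTc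
    have e1 : Tcᴴ * Scᴴ = 1 := by
      rw [← Matrix.conjTranspose_mul, hSTc, Matrix.conjTranspose_one]
    calc Tcᴴ * !![0, 0, 1; 0, (qβ : ℂ), 0; 1, 0, 0] * Tc
        = Tcᴴ * (Scᴴ * Jc * Sc) * Tc := by rw [Gram]
      _ = (Tcᴴ * Scᴴ) * Jc * (Sc * Tc) := by noncomm_ring
      _ = Jc := by rw [e1, hSTc, Matrix.one_mul, Matrix.mul_one]
  · have hTS : S⁻¹ * S = 1 := Matrix.nonsing_inv_mul _ hdetSu
    have hSe : S *ᵥ Pi.single (0 : Fin 3) (1 : F) = v := by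
      rw [Matrix.mulVec_single]
      funext i
      rw [Pi.smul_apply, MulOpposite.op_one, one_smul]
      apply Subtype.ext
      rfl
    rw [← hSe, Matrix.mulVec_mulVec, hTS, Matrix.one_mulVec]
end

section
/- Let F ⊆ ℂ be an imaginary quadratic field and let J ∈ GL₃(F) be hermitian of signature (2,1). Then the special unitary group {g ∈ SL₃(F) : gᴴ J g = J} acts transitively on the set of isotropic lines: for any two nonzero isotropic vectors v, w ∈ F³ for J, there exist g ∈ SL₃(F) with gᴴ J g = J and a scalar c ∈ Fˣ such that g · v = c • w. -/
open Matrix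

set_option synthInstance.maxHeartbeats 400000

open Polynomial


lemma conj_mem_aux (F : IntermediateField ℚ ℂ)
    (hdeg : Module.finrank ℚ F = 2) (x : F) :
    (starRingEnd ℂ) (x : ℂ) ∈ F := by
  haveI : FiniteDimensional ℚ F := FiniteDimensional.of_finrank_eq_succ hdeg
  have hint : IsIntegral ℚ x := IsIntegral.of_finite ℚ x
  set p := minpoly ℚ x with hp
  have hdle : p.natDegree ≤ 2 := hdeg ▸ minpoly.natDegree_le x
  have hdpos : 0 < p.natDegree := minpoly.natDegree_pos hint
  have hmonic : p.Monic := minpoly.monic hint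
  have haev : Polynomial.aeval (x : ℂ) p = 0 := by
    have h1 := minpoly.aeval ℚ x
    have h2 : Polynomial.aeval ((algebraMap F ℂ) x) p = (algebraMap F ℂ) (Polynomial.aeval x p) :=
      (Polynomial.aeval_algebraMap_apply ℂ x p)
    rw [h1, map_zero] at h2
    exact h2
  have haev2 : Polynomial.aeval ((starRingEnd ℂ) (x:ℂ)) p = 0 := by
    have := Polynomial.aeval_algHom_apply (Complex.conjAe.toAlgHom.restrictScalars ℚ) (x:ℂ) p
    simpa [haev] using this
  set z : ℂ := (x : ℂ) with hz
  set y : ℂ := (starRingEnd ℂ) z with hy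
  have hzF : z ∈ F := x.2
  have hcases : p.natDegree = 1 ∨ p.natDegree = 2 := by omega
  rcases hcases with hd | hd
  · have hc1 : p.coeff 1 = 1 := by rw [← hd]; exact hmonic.coeff_natDegree
    have e1 := Polynomial.aeval_eq_sum_range (R := ℚ) (S := ℂ) (p := p) z
    have e2 := Polynomial.aeval_eq_sum_range (R := ℚ) (S := ℂ) (p := p) y
    rw [haev, hd] at e1
    rw [haev2, hd] at e2
    simp [Finset.sum_range_succ, hc1] at e1 e2
    have : y = z := by linear_combination e1 - e2
    rw [this]; exact hzF
  · have hc2 : p.coeff 2 = 1 := by rw [← hd]; exact hmonic.coeff_natDegree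
    have e1 := Polynomial.aeval_eq_sum_range (R := ℚ) (S := ℂ) (p := p) z
    have e2 := Polynomial.aeval_eq_sum_range (R := ℚ) (S := ℂ) (p := p) y
    rw [haev, hd] at e1
    rw [haev2, hd] at e2
    simp [Finset.sum_range_succ, hc2, Rat.smul_def] at e1 e2
    have key : (z - y) * (z + y + (p.coeff 1 : ℂ)) = 0 := by linear_combination e2 - e1
    rcases mul_eq_zero.1 key with h | h
    · have : y = z := by linear_combination -h
      rw [this]; exact hzF
    · have : y = -(p.coeff 1 : ℂ) - z := by linear_combination h
      rw [this]
      exact sub_mem (neg_mem (by exact_mod_cast SubfieldClass.ratCast_mem F (p.coeff 1))) hzF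

lemma hermsym {J : Matrix (Fin 3) (Fin 3) ℂ} (hherm : Jᴴ = J) (p q : Fin 3 → ℂ) :
    star p ⬝ᵥ (J *ᵥ q) = (starRingEnd ℂ) (star q ⬝ᵥ (J *ᵥ p)) := by
  show _ = star (star q ⬝ᵥ (J *ᵥ p))
  rw [star_dotProduct q (J *ᵥ p), star_star, star_mulVec, hherm,
    ← Matrix.dotProduct_mulVec]

lemma hermmem (K : Subfield ℂ) (hK : ∀ x ∈ K, (starRingEnd ℂ) x ∈ K)
    {J : Matrix (Fin 3) (Fin 3) ℂ} (hJK : ∀ i j, J i j ∈ K)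
    {p q : Fin 3 → ℂ} (hp : ∀ i, p i ∈ K) (hq : ∀ i, q i ∈ K) :
    star p ⬝ᵥ (J *ᵥ q) ∈ K := by
  simp only [dotProduct, Matrix.mulVec, Pi.star_apply, RCLike.star_def]
  exact K.sum_mem fun i _ => K.mul_mem (hK _ (hp i))
    (K.sum_mem fun j _ => K.mul_mem (hJK i j) (hq j))

lemma gram_entry (J B : Matrix (Fin 3) (Fin 3) ℂ) (k l : Fin 3) :
    (Bᴴ * J * B) k l = star (fun i => B i k) ⬝ᵥ (J *ᵥ fun i => B i l) := by
  simp only [Matrix.mul_apply, Matrix.conjTranspose_apply, Matrix.mulVec,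
    dotProduct, Pi.star_apply, Finset.sum_mul, Finset.mul_sum]
  rw [Finset.sum_comm]
  exact Finset.sum_congr rfl fun i _ => Finset.sum_congr rfl fun j _ => by ring

set_option maxHeartbeats 1000000 in
lemma isotropic_basis (K : Subfield ℂ) (hK : ∀ x ∈ K, (starRingEnd ℂ) x ∈ K)
    (J : Matrix (Fin 3) (Fin 3) ℂ) (hJK : ∀ i j, J i j ∈ K)
    (hJdet : J.det ≠ 0) (hherm : Jᴴ = J)
    (v : Fin 3 → ℂ) (hvK : ∀ i, v i ∈ K) (hv : v ≠ 0)
    (hiso : star v ⬝ᵥ (J *ᵥ v) = 0) :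
    ∃ B : Matrix (Fin 3) (Fin 3) ℂ, (∀ i j, B i j ∈ K) ∧ B.det ≠ 0 ∧
      (fun i => B i 0) = v ∧
      Bᴴ * J * B = !![0,1,0;1,0,0;0,0, -(star B.det * J.det * B.det)] := by
  classical
  set h : (Fin 3 → ℂ) → (Fin 3 → ℂ) → ℂ := fun p q => star p ⬝ᵥ (J *ᵥ q) with hh
  have hsymm : ∀ p q, h p q = (starRingEnd ℂ) (h q p) := fun p q => hermsym hherm p q
  have hsingleK : ∀ (j i : Fin 3), (Pi.single j 1 : Fin 3 → ℂ) i ∈ K := by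
    intro j i
    rcases eq_or_ne j i with rfl | hne
    · simpa using K.one_mem
    · simpa [Pi.single_apply, hne.symm] using K.zero_mem
  -- find j with (star v ᵥ* J) j ≠ 0
  have hstarv : star v ≠ 0 := fun hsv => hv (by simpa using congrArg star hsv)
  have hrne : star v ᵥ* J ≠ 0 := by
    intro hr
    have h0 : Jᵀ *ᵥ star v = 0 := by rw [Matrix.mulVec_transpose]; exact hr
    have : Jᵀ.det = 0 := (Matrix.exists_mulVec_eq_zero_iff).1 ⟨star v, hstarv, h0⟩
    rw [Matrix.det_transpose] at this
    exact hJdet this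
  obtain ⟨j, hj⟩ := Function.ne_iff.1 hrne
  have hj' : star v ᵥ* J ⬝ᵥ Pi.single j 1 ≠ 0 := by
    rw [dotProduct_single]; simpa using hj
  -- x1 with h v x1 = 1
  set x1 : Fin 3 → ℂ := ((star v ᵥ* J) j)⁻¹ • (Pi.single j 1 : Fin 3 → ℂ) with hx1
  have hvx1 : h v x1 = 1 := by
    rw [hh]
    simp only [hx1, Matrix.mulVec_smul, dotProduct_smul, smul_eq_mul]
    rw [Matrix.dotProduct_mulVec, dotProduct_single]
    rw [mul_one]
    exact inv_mul_cancel₀ hj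
  have hx1K : ∀ i, x1 i ∈ K := by
    intro i
    apply K.mul_mem _ (hsingleK j i)
    apply K.inv_mem
    have : (star v ᵥ* J) j = star v ⬝ᵥ (J *ᵥ Pi.single j 1) := by
      rw [Matrix.dotProduct_mulVec, dotProduct_single, mul_one]
    rw [this]
    exact hermmem K hK hJK hvK (hsingleK j)
  -- expansion lemmas
  have hexp2 : ∀ (p q r : Fin 3 → ℂ) (c : ℂ), h p (q - c • r) = h p q - c * h p r := by
    intro p q r c
    simp only [hh, Matrix.mulVec_sub, dotProduct_sub, Matrix.mulVec_smul,
      dotProduct_smul, smul_eq_mul]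
  have hexp1 : ∀ (p q r : Fin 3 → ℂ) (c : ℂ),
      h (q - c • r) p = h q p - (starRingEnd ℂ) c * h r p := by
    intro p q r c
    simp only [hh, star_sub, sub_dotProduct, star_smul,
      smul_dotProduct, smul_eq_mul, RCLike.star_def]
  have hexp3 : ∀ (p q r s : Fin 3 → ℂ) (c d e : ℂ),
      h p (c • q + d • r + e • s) = c * h p q + d * h p r + e * h p s := by
    intro p q r s c d e
    simp only [hh, Matrix.mulVec_add, dotProduct_add, Matrix.mulVec_smul,
      dotProduct_smul, smul_eq_mul]
  set μ : ℂ := h x1 x1 with hμ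
  have hμreal : (starRingEnd ℂ) μ = μ := (hsymm x1 x1).symm
  set v2 : Fin 3 → ℂ := x1 - (μ/2) • v with hv2
  have hv2K : ∀ i, v2 i ∈ K := by
    intro i
    have hμK : μ ∈ K := hermmem K hK hJK hx1K hx1K
    have h2K : (2:ℂ) ∈ K := by
      have := K.add_mem K.one_mem K.one_mem
      norm_num at this ⊢
    exact K.sub_mem (hx1K i) (K.mul_mem (K.div_mem hμK h2K) (hvK i))
  have hvv2 : h v v2 = 1 := by
    rw [hv2, hexp2, hvx1]
    rw [show h v v = 0 from hiso]
    ring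
  have hv2v : h v2 v = 1 := by
    rw [hsymm v2 v, hvv2, _root_.map_one]
  have hx1v : h x1 v = 1 := by
    rw [hsymm x1 v, hvx1, _root_.map_one]
  have hv2v2 : h v2 v2 = 0 := by
    have e1 : h v2 v2 = h v2 x1 - (μ/2) * h v2 v := by rw [hv2]; exact hexp2 v2 x1 v (μ/2)
    have e2 : h v2 x1 = h x1 x1 - (starRingEnd ℂ) (μ/2) * h v x1 := by
      rw [hv2]; exact hexp1 x1 x1 v (μ/2)
    rw [e1, e2, hv2v, hvx1, ← hμ, map_div₀, hμreal, map_ofNat]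
    ring
  -- third vector
  set a : Fin 3 → ℂ := fun k => h v2 (Pi.single k 1) with ha
  set b : Fin 3 → ℂ := fun k => h v (Pi.single k 1) with hb
  set zf : Fin 3 → Fin 3 → ℂ :=
    fun k => ((Pi.single k 1 : Fin 3 → ℂ) - a k • v) - b k • v2 with hzf
  have hvv : h v v = 0 := hiso
  have hvzf : ∀ k, h v (zf k) = 0 := by
    intro k
    have hbk : h v (Pi.single k 1) = b k := rfl
    show h v (((Pi.single k 1 : Fin 3 → ℂ) - a k • v) - b k • v2) = 0
    rw [hexp2, hexp2, hvv2, hvv, hbk]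
    ring
  have hv2zf : ∀ k, h v2 (zf k) = 0 := by
    intro k
    have hak : h v2 (Pi.single k 1) = a k := rfl
    show h v2 (((Pi.single k 1 : Fin 3 → ℂ) - a k • v) - b k • v2) = 0
    rw [hexp2, hexp2, hv2v, hv2v2, hak]
    ring
  have hkex : ∃ k, zf k ≠ 0 := by
    by_contra hall
    push_neg at hall
    have hsingle : ∀ k i, (Pi.single k 1 : Fin 3 → ℂ) i = a k * v i + b k * v2 i := by
      intro k i
      have := congrFun (hall k) i
      simp only [hzf, Pi.sub_apply, Pi.smul_apply, smul_eq_mul, Pi.zero_apply] at this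
      linear_combination this
    have hMN : (Matrix.of ![v, v2, (0 : Fin 3 → ℂ)])ᵀ * (Matrix.of ![a, b, (0 : Fin 3 → ℂ)]) = 1 := by
      ext i k
      rw [Matrix.mul_apply, Fin.sum_univ_three]
      simp only [Matrix.transpose_apply, Matrix.of_apply, Matrix.cons_val_zero,
        Matrix.cons_val_one, Matrix.head_cons, Matrix.cons_val_two, Matrix.tail_cons,
        Pi.zero_apply, Matrix.one_apply]
      have hsk := hsingle k i
      rw [Pi.single_apply] at hsk
      linear_combination -hsk
    have hMzero : ((Matrix.of ![v, v2, (0 : Fin 3 → ℂ)])ᵀ).det = 0 := by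
      rw [Matrix.det_transpose]
      apply Matrix.det_eq_zero_of_row_eq_zero 2
      intro j
      simp
    have hd := congrArg Matrix.det hMN
    rw [Matrix.det_mul, Matrix.det_one, hMzero, zero_mul] at hd
    exact zero_ne_one hd
  obtain ⟨k, hzk⟩ := hkex
  set z : Fin 3 → ℂ := zf k with hzdef
  have hz : z ≠ 0 := hzk
  have hvz : h v z = 0 := hvzf k
  have hv2z : h v2 z = 0 := hv2zf k
  have hzv : h z v = 0 := by rw [hsymm, hvz, map_zero]
  have hzv2 : h z v2 = 0 := by rw [hsymm, hv2z, map_zero]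
  have hzK : ∀ i, z i ∈ K := by
    intro i
    have haK : a k ∈ K := hermmem K hK hJK hv2K (hsingleK k)
    have hbK : b k ∈ K := hermmem K hK hJK hvK (hsingleK k)
    show (Pi.single k 1 : Fin 3 → ℂ) i - a k * v i - b k * v2 i ∈ K
    exact K.sub_mem (K.sub_mem (hsingleK k i) (K.mul_mem haK (hvK i)))
      (K.mul_mem hbK (hv2K i))
  set B : Matrix (Fin 3) (Fin 3) ℂ := (Matrix.of ![v, v2, z])ᵀ with hB
  have hBcol0 : (fun i => B i 0) = v := rfl
  have hBcol1 : (fun i => B i 1) = v2 := rfl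
  have hBcol2 : (fun i => B i 2) = z := rfl
  have hBK : ∀ i jj, B i jj ∈ K := by
    intro i jj
    fin_cases jj
    · exact hvK i
    · exact hv2K i
    · exact hzK i
  have hzero : h v 0 = 0 := by simp [hh]
  have hzero2 : h v2 0 = 0 := by simp [hh]
  have hBmul : ∀ c : Fin 3 → ℂ, B *ᵥ c = c 0 • v + c 1 • v2 + c 2 • z := by
    intro c
    funext i
    show (B *ᵥ c) i = _
    rw [Matrix.mulVec, dotProduct, Fin.sum_univ_three]
    show B i 0 * c 0 + B i 1 * c 1 + B i 2 * c 2 = _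
    have b0 : B i 0 = v i := rfl
    have b1 : B i 1 = v2 i := rfl
    have b2 : B i 2 = z i := rfl
    rw [b0, b1, b2]
    simp only [Pi.add_apply, Pi.smul_apply, smul_eq_mul]
    ring
  have hdB : B.det ≠ 0 := by
    intro h0
    obtain ⟨c, hc, hc0⟩ := (Matrix.exists_mulVec_eq_zero_iff).2 h0
    rw [hBmul] at hc0
    have e1 : c 1 = 0 := by
      have hcc := congrArg (h v) hc0
      rw [hexp3, hvv, hvv2, hvz, hzero] at hcc
      linear_combination hcc
    have e0 : c 0 = 0 := by
      have hcc := congrArg (h v2) hc0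
      rw [hexp3, hv2v, hv2v2, hv2z, hzero2] at hcc
      linear_combination hcc
    rw [e0, e1] at hc0
    simp only [zero_smul, zero_add] at hc0
    rcases smul_eq_zero.1 hc0 with h2 | h2
    · apply hc
      funext i
      fin_cases i <;> assumption
    · exact hz h2
  have hGram : Bᴴ * J * B = !![0,1,0;1,0,0;0,0, h z z] := by
    ext kk ll
    rw [gram_entry]
    fin_cases kk <;> fin_cases ll <;>
      simp only [hBcol0, hBcol1, hBcol2, Fin.zero_eta, Fin.mk_one, Fin.isValue,
        Matrix.cons_val_zero, Matrix.cons_val_one, Matrix.head_cons,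
        Matrix.cons_val_two, Matrix.tail_cons, Matrix.of_apply, Matrix.cons_val',
        Matrix.empty_val', Matrix.cons_val_fin_one, Matrix.head_fin_const] <;>
      first
        | exact hvv | exact hvv2 | exact hvz | exact hv2v | exact hv2v2
        | exact hv2z | exact hzv | exact hzv2 | rfl
  have hdetGram : star B.det * J.det * B.det = -(h z z) := by
    have hrhs : (!![0,1,0;1,0,0;0,0, h z z] : Matrix (Fin 3) (Fin 3) ℂ).det = -(h z z) := by
      rw [Matrix.det_fin_three]
      norm_num
      simp
    have hd := congrArg Matrix.det hGram
    rw [Matrix.det_mul, Matrix.det_mul, Matrix.det_conjTranspose, hrhs] at hd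
    exact hd
  refine ⟨B, hBK, hdB, hBcol0, ?_⟩
  rw [hGram, hdetGram, neg_neg]
lemma detK (K : Subfield ℂ) (M : Matrix (Fin 3) (Fin 3) ℂ) (hM : ∀ i j, M i j ∈ K) :
    M.det ∈ K := by
  rw [Matrix.det_fin_three]
  apply_rules [K.sub_mem, K.add_mem, K.mul_mem]

lemma invK (K : Subfield ℂ) (M : Matrix (Fin 3) (Fin 3) ℂ) (hM : ∀ i j, M i j ∈ K)
    (i j : Fin 3) : M⁻¹ i j ∈ K := by
  rw [Matrix.inv_def]
  have hadj : M.adjugate i j ∈ K := by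
    rw [Matrix.adjugate_apply]
    apply detK
    intro i' j'
    rw [Matrix.updateRow_apply]
    split
    · rcases eq_or_ne i j' with h | h <;> simp [Pi.single_apply, h]
    · exact hM i' j'
  have : (Ring.inverse M.det • M.adjugate) i j = Ring.inverse M.det * M.adjugate i j := rfl
  rw [this, Ring.inverse_eq_inv']
  exact K.mul_mem (K.inv_mem (detK K M hM)) hadj

lemma mulK (K : Subfield ℂ) (M N : Matrix (Fin 3) (Fin 3) ℂ) (hM : ∀ i j, M i j ∈ K)
    (hN : ∀ i j, N i j ∈ K) (i j : Fin 3) : (M * N) i j ∈ K := by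
  rw [Matrix.mul_apply]
  exact K.sum_mem fun k _ => K.mul_mem (hM i k) (hN k j)


set_option maxHeartbeats 4000000

/-- For an imaginary quadratic field `F ⊆ ℂ` and a hermitian `J ∈ GL₃(F)` of
signature `(2,1)`, the special unitary group `{g ∈ SL₃(F) : gᴴ J g = J}` acts transitively
on isotropic lines: any two nonzero isotropic vectors `v, w ∈ F³` satisfy `g ⬝ v = c • w`
for some such `g` and some `c ∈ Fˣ`. -/
theorem hecke_stmt4 (F : IntermediateField ℚ ℂ)
    (hdeg : Module.finrank ℚ F = 2)
    (him : ∃ z : F, (z : ℂ).im ≠ 0)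
    (J : Matrix (Fin 3) (Fin 3) F) (hJinv : IsUnit J.det)
    (hherm : (J.map ((↑) : F → ℂ))ᴴ = J.map ((↑) : F → ℂ))
    (hsig : ∃ P : Matrix (Fin 3) (Fin 3) ℂ, IsUnit P.det ∧
      Pᴴ * J.map ((↑) : F → ℂ) * P = Matrix.diagonal ![1, 1, -1])
    (v w : Fin 3 → F) (hv : v ≠ 0) (hw : w ≠ 0)
    (hisov : star (fun i => ((v i : ℂ))) ⬝ᵥ ((J.map ((↑) : F → ℂ)) *ᵥ fun i => ((v i : ℂ))) = 0)
    (hisow : star (fun i => ((w i : ℂ))) ⬝ᵥ ((J.map ((↑) : F → ℂ)) *ᵥ fun i => ((w i : ℂ))) = 0) :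
    ∃ g : Matrix (Fin 3) (Fin 3) F, g.det = 1 ∧
      (g.map ((↑) : F → ℂ))ᴴ * J.map ((↑) : F → ℂ) * g.map ((↑) : F → ℂ) =
        J.map ((↑) : F → ℂ) ∧
      ∃ c : F, c ≠ 0 ∧ g *ᵥ v = c • w := by
  classical
  set K : Subfield ℂ := F.toSubfield with hKdef
  have hK : ∀ x ∈ K, (starRingEnd ℂ) x ∈ K := by
    intro x hx
    exact conj_mem_aux F hdeg ⟨x, hx⟩
  set e : F →+* ℂ := (algebraMap F ℂ) with he
  set J' : Matrix (Fin 3) (Fin 3) ℂ := J.map ((↑) : F → ℂ) with hJ'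
  have hJK : ∀ i j, J' i j ∈ K := fun i j => (J i j).2
  have hJdet' : J'.det ≠ 0 := by
    have h1 : J'.det = e J.det := (RingHom.map_det e J).symm
    rw [h1]
    intro h0
    have : J.det = 0 := by
      apply Subtype.coe_injective
      exact h0
    rw [this] at hJinv
    simpa using hJinv
  set v' : Fin 3 → ℂ := fun i => (v i : ℂ) with hv'
  set w' : Fin 3 → ℂ := fun i => (w i : ℂ) with hw'
  have hv'K : ∀ i, v' i ∈ K := fun i => (v i).2
  have hw'K : ∀ i, w' i ∈ K := fun i => (w i).2
  have hv'ne : v' ≠ 0 := by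
    intro h0
    apply hv
    funext i
    exact Subtype.coe_injective (congrFun h0 i)
  have hw'ne : w' ≠ 0 := by
    intro h0
    apply hw
    funext i
    exact Subtype.coe_injective (congrFun h0 i)
  obtain ⟨Bv, hBvK, hdBv, hBvcol, hBvGram⟩ :=
    isotropic_basis K hK J' hJK hJdet' hherm v' hv'K hv'ne hisov
  obtain ⟨Bw, hBwK, hdBw, hBwcol, hBwGram⟩ :=
    isotropic_basis K hK J' hJK hJdet' hherm w' hw'K hw'ne hisow
  set t : ℂ := Bv.det / Bw.det with ht
  have htne : t ≠ 0 := div_ne_zero hdBv hdBw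
  set D : Matrix (Fin 3) (Fin 3) ℂ := Matrix.diagonal ![1, 1, t] with hD
  set G : Matrix (Fin 3) (Fin 3) ℂ := Bw * D * Bv⁻¹ with hG
  have hDdet : D.det = t := by
    rw [hD, Matrix.det_diagonal, Fin.prod_univ_three]
    norm_num
    rfl
  have hGdet : G.det = 1 := by
    rw [hG, Matrix.det_mul, Matrix.det_mul, hDdet, Matrix.det_nonsing_inv,
      Ring.inverse_eq_inv', ht]
    field_simp
  have h1 : (starRingEnd ℂ) Bw.det ≠ 0 := by
    simpa using star_ne_zero.2 hdBw
  have e1 : (starRingEnd ℂ) Bw.det * ((starRingEnd ℂ) Bw.det)⁻¹ = 1 := mul_inv_cancel₀ h1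
  have e2 : Bw.det * Bw.det⁻¹ = 1 := mul_inv_cancel₀ hdBw
  -- the key middle identity
  have hkey : Dᴴ * !![0,1,0;1,0,0;0,0, -(star Bw.det * J'.det * Bw.det)] * D =
      !![0,1,0;1,0,0;0,0, -(star Bv.det * J'.det * Bv.det)] := by
    rw [hD, Matrix.diagonal_conjTranspose]
    ext i j
    rw [Matrix.mul_diagonal, Matrix.diagonal_mul]
    fin_cases i <;> fin_cases j <;>
      simp [Matrix.vecHead, Matrix.vecTail, ht]
    linear_combination ((starRingEnd ℂ) Bv.det * Bv.det * J'.det *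
        (starRingEnd ℂ) Bw.det * ((starRingEnd ℂ) Bw.det)⁻¹) * e2 +
      ((starRingEnd ℂ) Bv.det * Bv.det * J'.det) * e1
  -- unitarity over ℂ
  have hBvH : IsUnit Bvᴴ.det := by
    rw [Matrix.det_conjTranspose]
    exact isUnit_iff_ne_zero.2 (star_ne_zero.2 hdBv)
  have hBvU : IsUnit Bv.det := isUnit_iff_ne_zero.2 hdBv
  have hunit : Gᴴ * J' * G = J' := by
    calc Gᴴ * J' * G
        = (Bv⁻¹)ᴴ * Dᴴ * (Bwᴴ * J' * Bw) * D * Bv⁻¹ := by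
          rw [hG]
          simp only [Matrix.conjTranspose_mul, Matrix.mul_assoc]
      _ = (Bv⁻¹)ᴴ * Dᴴ * !![0,1,0;1,0,0;0,0, -(star Bw.det * J'.det * Bw.det)] * D * Bv⁻¹ := by
          rw [hBwGram]
      _ = (Bv⁻¹)ᴴ * (Dᴴ * !![0,1,0;1,0,0;0,0, -(star Bw.det * J'.det * Bw.det)] * D) * Bv⁻¹ := by
          simp only [Matrix.mul_assoc]
      _ = (Bv⁻¹)ᴴ * (Bvᴴ * J' * Bv) * Bv⁻¹ := by rw [hkey, hBvGram]
      _ = (Bvᴴ)⁻¹ * Bvᴴ * (J' * (Bv * Bv⁻¹)) := by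
          rw [Matrix.conjTranspose_nonsing_inv]
          simp only [Matrix.mul_assoc]
      _ = J' := by
          rw [Matrix.nonsing_inv_mul _ hBvH, Matrix.mul_nonsing_inv _ hBvU,
            Matrix.mul_one, Matrix.one_mul]
  -- entries of G lie in K
  have htK : t ∈ K := K.div_mem (detK K Bv hBvK) (detK K Bw hBwK)
  have hDK : ∀ i j, D i j ∈ K := by
    intro i j
    rw [hD, Matrix.diagonal_apply]
    split
    · fin_cases i
      · exact K.one_mem
      · exact K.one_mem
      · exact htK
    · exact K.zero_mem
  have hGK : ∀ i j, G i j ∈ K := by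
    intro i j
    rw [hG]
    exact mulK K _ _ (fun i j => mulK K _ _ hBwK hDK i j) (invK K Bv hBvK) i j
  -- descend to F
  set g : Matrix (Fin 3) (Fin 3) F := Matrix.of (fun i j => (⟨G i j, hGK i j⟩ : F)) with hg
  have hgmap : g.map ((↑) : F → ℂ) = G := by
    ext i j
    rfl
  have hgdet : g.det = 1 := by
    have hcd : (g.map ((↑) : F → ℂ)).det = 1 := by rw [hgmap]; exact hGdet
    have h2 : (algebraMap F ℂ) g.det = (algebraMap F ℂ) 1 := by
      rw [RingHom.map_det, RingHom.mapMatrix_apply, _root_.map_one]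
      exact hcd
    have h3 : (g.det : ℂ) = ((1 : F) : ℂ) := h2
    exact Subtype.coe_injective h3
  -- mulVec
  have hBv0 : Bv *ᵥ (Pi.single 0 1) = v' := by
    rw [Matrix.mulVec_single_one]
    funext i
    exact congrFun hBvcol i
  have hBw0 : Bw *ᵥ (Pi.single 0 1) = w' := by
    rw [Matrix.mulVec_single_one]
    funext i
    exact congrFun hBwcol i
  have s1 : Bv⁻¹ *ᵥ v' = Pi.single 0 1 := by
    rw [← hBv0, Matrix.mulVec_mulVec, Matrix.nonsing_inv_mul _ hBvU, Matrix.one_mulVec]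
  have s2 : D *ᵥ (Pi.single 0 1 : Fin 3 → ℂ) = Pi.single 0 1 := by
    rw [hD, Matrix.diagonal_mulVec_single]
    norm_num
  have hGv : G *ᵥ v' = w' := by
    rw [hG, ← Matrix.mulVec_mulVec, s1, ← Matrix.mulVec_mulVec, s2, hBw0]
  have hvmap : ∀ i, ((g *ᵥ v) i : ℂ) = (G *ᵥ v') i := by
    intro i
    show algebraMap F ℂ (∑ j, g i j * v j) = ∑ j, G i j * v' j
    rw [map_sum]
    refine Finset.sum_congr rfl fun j _ => ?_
    rw [_root_.map_mul]
    rfl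
  have hgv : g *ᵥ v = (1 : F) • w := by
    rw [one_smul]
    funext i
    apply Subtype.coe_injective
    show ((g *ᵥ v) i : ℂ) = (w i : ℂ)
    rw [hvmap i, hGv]
  exact ⟨g, hgdet, by rw [hgmap]; exact hunit, 1, one_ne_zero, hgv⟩
end

section
/- Let g ∈ SU(2,1) have block decomposition g = [[A, B], [C, D]] with A ∈ M₂(ℂ), B a 2×1 column, C a 1×2 row, and D ∈ ℂ, and let U ∈ 𝒟_{2,1} (i.e., U is a column vector in ℂ² with UᴴU < 1). Then the scalar C·U + D is nonzero, and the column vector (A·U + B)·(C·U + D)⁻¹ again lies in 𝒟_{2,1}. In other words, the generalized fractional transformation g·U := (A·U + B)(C·U + D)⁻¹ is a well-defined self-map of the ball 𝒟_{2,1}. -/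
open Matrix

noncomputable section

/-- `J₀ = diag(1, 1, −1)`. -/
def J0 : Matrix (Fin 3) (Fin 3) ℂ := Matrix.diagonal ![1, 1, -1]

/-- `SU(2,1) = {g ∈ M₃(ℂ) : gᴴ J₀ g = J₀, det g = 1}`. -/
def SU21 : Set (Matrix (Fin 3) (Fin 3) ℂ) := {g | gᴴ * J0 * g = J0 ∧ g.det = 1}

/-- The upper-left `2×2` block `A` of `g`. -/
def blockA (g : Matrix (Fin 3) (Fin 3) ℂ) : Matrix (Fin 2) (Fin 2) ℂ :=
  Matrix.of fun i j => g i.castSucc j.castSucc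

/-- The upper-right `2×1` block `B` of `g`. -/
def blockB (g : Matrix (Fin 3) (Fin 3) ℂ) : Matrix (Fin 2) (Fin 1) ℂ :=
  Matrix.of fun i _ => g i.castSucc 2

/-- The lower-left `1×2` block `C` of `g`. -/
def blockC (g : Matrix (Fin 3) (Fin 3) ℂ) : Matrix (Fin 1) (Fin 2) ℂ :=
  Matrix.of fun _ j => g 2 j.castSucc

/-- The `(3,3)` entry `D` of `g`. -/
def blockD (g : Matrix (Fin 3) (Fin 3) ℂ) : ℂ := g 2 2

/-- Membership in the ball `𝒟_{2,1} = {U ∈ M_{2,1}(ℂ) : ŪᵀU − 1 < 0}`. -/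
def inBall (U : Matrix (Fin 2) (Fin 1) ℂ) : Prop := ((Uᴴ * U) 0 0).re < 1

/-- The generalized fractional transformation `g·U = (A·U + B)(C·U + D)⁻¹`. -/
def ballAct (g : Matrix (Fin 3) (Fin 3) ℂ) (U : Matrix (Fin 2) (Fin 1) ℂ) :
    Matrix (Fin 2) (Fin 1) ℂ :=
  ((blockC g * U) 0 0 + blockD g)⁻¹ • (blockA g * U + blockB g)

end

/-- For `g ∈ SU(2,1)` and `U ∈ 𝒟_{2,1}`, the scalar `C·U + D` is nonzero and
`(A·U + B)(C·U + D)⁻¹` lies again in `𝒟_{2,1}`: the generalized fractional transformation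
is a well-defined self-map of the ball. -/
theorem hecke_stmt6 (g : Matrix (Fin 3) (Fin 3) ℂ) (hg : g ∈ SU21)
    (U : Matrix (Fin 2) (Fin 1) ℂ) (hU : inBall U) :
    (blockC g * U) 0 0 + blockD g ≠ 0 ∧ inBall (ballAct g U) := by
  obtain ⟨h1, -⟩ := hg
  have hE : ∀ k l : Fin 3, (starRingEnd ℂ) (g 0 k) * g 0 l + (starRingEnd ℂ) (g 1 k) * g 1 l
      - (starRingEnd ℂ) (g 2 k) * g 2 l = J0 k l := by
    intro k l
    have := congrFun (congrFun h1 k) l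
    simp (config := { decide := true }) only [Matrix.mul_apply, Fin.sum_univ_three,
      Matrix.conjTranspose_apply, J0, Matrix.diagonal_apply, Matrix.cons_val_zero,
      Matrix.cons_val_one, Matrix.head_cons, if_true, if_false, Matrix.cons_val_two,
      Matrix.tail_cons, mul_one, mul_zero, add_zero, zero_add, mul_neg, starRingEnd_apply] at this ⊢
    linear_combination this
  have hJ : ∀ k l : Fin 3, J0 k l = if k = l then ![1,1,-1] k else 0 := by
    intro k l; simp [J0, Matrix.diagonal_apply]
  set u0 := U 0 0 with hu0
  set u1 := U 1 0 with hu1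
  set p0 := g 0 0 * u0 + g 0 1 * u1 + g 0 2 with hp0
  set p1 := g 1 0 * u0 + g 1 1 * u1 + g 1 2 with hp1
  set p2 := g 2 0 * u0 + g 2 1 * u1 + g 2 2 with hp2
  have key : (starRingEnd ℂ) p0 * p0 + (starRingEnd ℂ) p1 * p1 - (starRingEnd ℂ) p2 * p2
      = (starRingEnd ℂ) u0 * u0 + (starRingEnd ℂ) u1 * u1 - 1 := by
    have e00 := hE 0 0; have e01 := hE 0 1; have e02 := hE 0 2
    have e10 := hE 1 0; have e11 := hE 1 1; have e12 := hE 1 2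
    have e20 := hE 2 0; have e21 := hE 2 1; have e22 := hE 2 2
    simp only [hJ] at e00 e01 e02 e10 e11 e12 e20 e21 e22
    norm_num [Fin.ext_iff] at e00 e01 e02 e10 e11 e12 e20 e21 e22
    have h2 : (![1, 1, -1] : Fin 3 → ℂ) 2 = -1 := rfl
    rw [h2] at e22
    simp only [hp0, hp1, hp2, map_add, _root_.map_mul]
    linear_combination (starRingEnd ℂ) u0 * u0 * e00 + (starRingEnd ℂ) u0 * u1 * e01
      + (starRingEnd ℂ) u0 * e02 + (starRingEnd ℂ) u1 * u0 * e10
      + (starRingEnd ℂ) u1 * u1 * e11 + (starRingEnd ℂ) u1 * e12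
      + u0 * e20 + u1 * e21 + e22
  have keyR : Complex.normSq p0 + Complex.normSq p1 - Complex.normSq p2
      = Complex.normSq u0 + Complex.normSq u1 - 1 := by
    have := congrArg Complex.re key
    simpa [← Complex.normSq_eq_conj_mul_self] using this
  have hz : ∀ z : ℂ, (starRingEnd ℂ) z * z = (Complex.normSq z : ℂ) := fun z => by
    rw [mul_comm, Complex.mul_conj]
  have hUre : Complex.normSq u0 + Complex.normSq u1 < 1 := by
    have h := hU
    simp only [inBall, Matrix.mul_apply, Fin.sum_univ_two, Matrix.conjTranspose_apply,
      Complex.star_def, hz] at h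
    rw [← Complex.ofReal_add, Complex.ofReal_re] at h
    exact h
  have hc : (blockC g * U) 0 0 + blockD g = p2 := by
    simp [blockC, blockD, Matrix.mul_apply, Fin.sum_univ_two, hp2, hu0, hu1]
  have hp2pos : 0 < Complex.normSq p2 := by
    nlinarith [Complex.normSq_nonneg p0, Complex.normSq_nonneg p1]
  have hne : p2 ≠ 0 := fun h => by simp [h] at hp2pos
  refine ⟨hc ▸ hne, ?_⟩
  have hb : ballAct g U = p2⁻¹ • (blockA g * U + blockB g) := by rw [ballAct, hc]
  have hact : ((ballAct g U)ᴴ * ballAct g U) 0 0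
      = (starRingEnd ℂ) (p2⁻¹ * p0) * (p2⁻¹ * p0) + (starRingEnd ℂ) (p2⁻¹ * p1) * (p2⁻¹ * p1) := by
    simp only [hb, hp0, hp1, hp2, hu0, hu1, Matrix.conjTranspose_apply, Matrix.mul_apply,
      Fin.sum_univ_two, Matrix.smul_apply, Matrix.add_apply, blockA, blockB, Matrix.of_apply,
      smul_eq_mul, Complex.star_def, map_add, _root_.map_mul, map_inv₀,
      Fin.castSucc_zero, Fin.castSucc_one]
  have hre : (((ballAct g U)ᴴ * ballAct g U) 0 0).re
      = (Complex.normSq p0 + Complex.normSq p1) / Complex.normSq p2 := by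
    rw [hact, hz, hz, ← Complex.ofReal_add, Complex.ofReal_re, Complex.normSq_mul,
      Complex.normSq_mul, Complex.normSq_inv]
    field_simp
  rw [inBall, hre, div_lt_one hp2pos]
  nlinarith
end

section
/- The action of SU(2,1) on the ball 𝒟_{2,1} by generalized fractional transformations is transitive: for every U ∈ 𝒟_{2,1} there exists g ∈ SU(2,1) with g·0 = U, i.e., writing g = [[A, B], [C, D]] in block form, D ≠ 0 and B·D⁻¹ = U. -/
open Matrix

set_option maxHeartbeats 1000000 in
/-- The action of SU(2,1) on `𝒟_{2,1}` is transitive: every `U ∈ 𝒟_{2,1}` is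
of the form `g·0 = B·D⁻¹` for some `g ∈ SU(2,1)` (with `D ≠ 0`). -/
theorem hecke_stmt8 (U : Matrix (Fin 2) (Fin 1) ℂ) (hU : inBall U) :
    ∃ g ∈ SU21, blockD g ≠ 0 ∧ (blockD g)⁻¹ • blockB g = U := by
  classical
  set u1 : ℂ := U 0 0 with hu1
  set u2 : ℂ := U 1 0 with hu2
  set r2 : ℝ := Complex.normSq u1 + Complex.normSq u2 with hr2
  have hrlt : r2 < 1 := by
    have h : ((Uᴴ * U) 0 0).re = r2 := by
      simp [Matrix.mul_apply, Fin.sum_univ_two, Matrix.conjTranspose_apply, hu1, hu2, hr2,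
        Complex.add_re, Complex.normSq_apply, Complex.mul_re]
      try ring
    rw [inBall, h] at hU
    exact hU
  have hpos : (0:ℝ) < 1 - r2 := by linarith
  set t : ℝ := (Real.sqrt (1 - r2))⁻¹ with ht
  have htpos : 0 < t := by
    rw [ht]; exact inv_pos.mpr (Real.sqrt_pos.mpr hpos)
  have ht2 : t ^ 2 * (1 - r2) = 1 := by
    rw [ht, inv_pow, Real.sq_sqrt hpos.le]
    field_simp
  set s : ℝ := t ^ 2 / (t + 1) with hs
  have ht1 : t + 1 ≠ 0 := by positivity
  have hst : s * (t + 1) = t ^ 2 := by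
    rw [hs]; field_simp
  have hsr : s * r2 = t - 1 := by
    have h : s * r2 * (t + 1) = (t - 1) * (t + 1) := by nlinarith [hst]
    exact mul_right_cancel₀ ht1 h
  have h3 : 2 * s + s ^ 2 * r2 = t ^ 2 := by
    have h : (2 * s + s ^ 2 * r2) * (t + 1) = t ^ 2 * (t + 1) := by nlinarith [hst, hsr]
    exact mul_right_cancel₀ ht1 h
  -- complex versions
  have hα : (starRingEnd ℂ) u1 * u1 + (starRingEnd ℂ) u2 * u2 = (r2 : ℂ) := by
    rw [mul_comm ((starRingEnd ℂ) u1), mul_comm ((starRingEnd ℂ) u2),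
      Complex.mul_conj, Complex.mul_conj]
    push_cast [hr2]
    ring
  have e1 : (t:ℂ) ^ 2 * (1 - (r2 : ℂ)) = 1 := by exact_mod_cast congrArg Complex.ofReal ht2
  have e2 : (s:ℂ) * (r2 : ℂ) = (t:ℂ) - 1 := by exact_mod_cast congrArg Complex.ofReal hsr
  have e3 : 2 * (s:ℂ) + (s:ℂ) ^ 2 * (r2 : ℂ) = (t:ℂ) ^ 2 := by
    exact_mod_cast congrArg Complex.ofReal h3
  have hTne : (t:ℂ) ≠ 0 := Complex.ofReal_ne_zero.mpr htpos.ne'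
  set g : Matrix (Fin 3) (Fin 3) ℂ :=
    !![1 + (s:ℂ) * u1 * (starRingEnd ℂ) u1, (s:ℂ) * u1 * (starRingEnd ℂ) u2, (t:ℂ) * u1;
       (s:ℂ) * u2 * (starRingEnd ℂ) u1, 1 + (s:ℂ) * u2 * (starRingEnd ℂ) u2, (t:ℂ) * u2;
       (t:ℂ) * (starRingEnd ℂ) u1, (t:ℂ) * (starRingEnd ℂ) u2, (t:ℂ)] with hg
  refine ⟨g, ⟨?_, ?_⟩, ?_, ?_⟩
  · -- gᴴ J0 g = J0
    ext i j
    fin_cases i <;> fin_cases j <;>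
      simp [hg, J0, Matrix.mul_apply, Fin.sum_univ_three, Matrix.conjTranspose_apply,
        Matrix.diagonal_apply, Complex.conj_ofReal]
    · linear_combination ((s:ℂ)^2 * ((starRingEnd ℂ) u1 * u1)) * hα +
        ((starRingEnd ℂ) u1 * u1) * e3
    · linear_combination ((s:ℂ)^2 * (u1 * (starRingEnd ℂ) u2)) * hα +
        (u1 * (starRingEnd ℂ) u2) * e3
    · linear_combination ((s:ℂ) * (t:ℂ) * u1) * hα + ((t:ℂ) * u1) * e2
    · linear_combination ((s:ℂ)^2 * (u2 * (starRingEnd ℂ) u1)) * hα +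
        (u2 * (starRingEnd ℂ) u1) * e3
    · linear_combination ((s:ℂ)^2 * ((starRingEnd ℂ) u2 * u2)) * hα +
        ((starRingEnd ℂ) u2 * u2) * e3
    · linear_combination ((s:ℂ) * (t:ℂ) * u2) * hα + ((t:ℂ) * u2) * e2
    · linear_combination ((s:ℂ) * (t:ℂ) * (starRingEnd ℂ) u1) * hα +
        ((t:ℂ) * (starRingEnd ℂ) u1) * e2
    · linear_combination ((s:ℂ) * (t:ℂ) * (starRingEnd ℂ) u2) * hα +
        ((t:ℂ) * (starRingEnd ℂ) u2) * e2
    · linear_combination (t:ℂ)^2 * hα - e1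
  · -- det
    rw [Matrix.det_fin_three]
    simp [hg]
    linear_combination ((t:ℂ) * (s:ℂ) - (t:ℂ) ^ 2) * hα + (t:ℂ) * e2 + e1
  · -- D ≠ 0
    simpa [blockD, hg] using hTne
  · -- B D⁻¹ = U
    ext i j
    fin_cases i <;> fin_cases j <;>
      · simp [blockB, blockD, hg]
        field_simp
        rfl
end
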